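/- Let y, λ ∈ ℝ₊^M with y ≠ 0, λ ≠ 0, and supp(y) ⊆ supp(λ); set Y = ‖y‖₁ and Λ = ‖λ‖₁. Let ε > 0 and suppose I(y‖λ) ≤ ε. Then ‖ y/Y − λ/Λ ‖₁ ≤ √(2ε/Y). -/

import Mathlib

noncomputable section


/-- Padé lower bound for log on `[1, ∞)`. -/
lemma pade_ge {t : ℝ} (ht : 1 ≤ t) : 2*(t-1)/(t+1) ≤ Real.log t := by
  set G : ℝ → ℝ := fun u => Real.log u - 2*(u-1)/(u+1) with hG
  have hder : ∀ x : ℝ, 0 < x →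
      HasDerivAt G (x⁻¹ - (2*(x+1) - 2*(x-1)*1)/(x+1)^2) x := by
    intro x hx
    have h1 := Real.hasDerivAt_log (ne_of_gt hx)
    have h2 : HasDerivAt (fun u : ℝ => 2*(u-1)) 2 x := by
      simpa using ((hasDerivAt_id x).sub_const (1:ℝ)).const_mul (2:ℝ)
    have h3 : HasDerivAt (fun u : ℝ => u+1) 1 x := (hasDerivAt_id x).add_const 1
    exact h1.sub (h2.div h3 (by linarith))
  have mono : MonotoneOn G (Set.Ici 1) := by
    apply monotoneOn_of_deriv_nonneg (convex_Ici 1)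
    · intro x hx
      exact (hder x (lt_of_lt_of_le one_pos hx)).continuousAt.continuousWithinAt
    · intro x hx
      rw [interior_Ici] at hx
      exact (hder x (lt_trans one_pos hx)).differentiableAt.differentiableWithinAt
    · intro x hx
      rw [interior_Ici] at hx
      have hx0 : (0:ℝ) < x := lt_trans one_pos hx
      rw [(hder x hx0).deriv]
      have h4 : (2*(x+1) - 2*(x-1)*1)/(x+1)^2 ≤ x⁻¹ := by
        rw [div_le_iff₀ (by positivity), inv_mul_eq_div, le_div_iff₀ hx0]
        nlinarith [sq_nonneg (x-1)]
      linarith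
  have h1 : G 1 ≤ G t := mono (by simp) (by exact ht) ht
  simp [hG, Real.log_one] at h1 ⊢
  linarith

lemma pade_le {t : ℝ} (h0 : 0 < t) (h1 : t ≤ 1) : Real.log t ≤ 2*(t-1)/(t+1) := by
  have hinv : 1 ≤ t⁻¹ := one_le_inv_iff₀.2 ⟨h0, h1⟩
  have := pade_ge hinv
  rw [Real.log_inv] at this
  have heq : 2*(t⁻¹-1)/(t⁻¹+1) = -(2*(t-1)/(t+1)) := by
    field_simp
    ring
  rw [heq] at this
  linarith

/-- Key scalar inequality: `3(t-1)²/(2t+4) ≤ t log t + 1 - t` for `t > 0`. -/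
lemma Fkey {t : ℝ} (ht : 0 < t) : 3*(t-1)^2/(2*t+4) ≤ t * Real.log t + 1 - t := by
  set F : ℝ → ℝ := fun u => u * Real.log u + 1 - u - 3*(u-1)^2/(2*u+4) with hF
  have hder : ∀ x : ℝ, 0 < x →
      HasDerivAt F ((Real.log x + 1) - 1 -
        ((3*(2*(x-1)^1*1))*(2*x+4) - 3*(x-1)^2*2)/(2*x+4)^2) x := by
    intro x hx
    have h1 : HasDerivAt (fun u : ℝ => u * Real.log u) (Real.log x + 1) x :=
      Real.hasDerivAt_mul_log (ne_of_gt hx)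
    have h2 : HasDerivAt (fun u : ℝ => 3*(u-1)^2) (3*(2*(x-1)^1*1)) x :=
      (((hasDerivAt_id x).sub_const (1:ℝ)).pow 2).const_mul (3:ℝ)
    have h3 : HasDerivAt (fun u : ℝ => 2*u+4) 2 x := by
      simpa using ((hasDerivAt_id x).const_mul (2:ℝ)).add_const (4:ℝ)
    exact ((h1.add_const 1).sub (hasDerivAt_id x)).sub (h2.div h3 (by linarith))
  have hF1 : F 1 = 0 := by simp [hF]
  have hFt : 0 ≤ F t := by
    rcases le_or_gt 1 t with h | h
    · have mono : MonotoneOn F (Set.Ici 1) := by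
        apply monotoneOn_of_deriv_nonneg (convex_Ici 1)
        · intro x hx
          exact (hder x (lt_of_lt_of_le one_pos hx)).continuousAt.continuousWithinAt
        · intro x hx
          rw [interior_Ici] at hx
          exact (hder x (lt_trans one_pos hx)).differentiableAt.differentiableWithinAt
        · intro x hx
          rw [interior_Ici] at hx
          have hx0 : (0:ℝ) < x := lt_trans one_pos hx
          rw [(hder x hx0).deriv]
          have hp := pade_ge (le_of_lt hx)
          have hd : ((3*(2*(x-1)^1*1))*(2*x+4) - 3*(x-1)^2*2)/(2*x+4)^2
              ≤ 2*(x-1)/(x+1) := by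
            rw [div_le_div_iff₀ (by positivity) (by positivity)]
            nlinarith [mul_nonneg (sub_nonneg.2 hx.le) (sq_nonneg (x-1))]
          linarith
      have := mono (Set.mem_Ici.2 le_rfl) (Set.mem_Ici.2 h) h
      linarith [hF1 ▸ this]
    · have anti : AntitoneOn F (Set.Ioc 0 1) := by
        apply antitoneOn_of_deriv_nonpos (convex_Ioc 0 1)
        · intro x hx
          exact (hder x hx.1).continuousAt.continuousWithinAt
        · intro x hx
          rw [interior_Ioc] at hx
          exact (hder x hx.1).differentiableAt.differentiableWithinAt
        · intro x hx
          rw [interior_Ioc] at hx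
          have hx0 : (0:ℝ) < x := hx.1
          rw [(hder x hx0).deriv]
          have hp := pade_le hx0 hx.2.le
          have hd : 2*(x-1)/(x+1) ≤
              ((3*(2*(x-1)^1*1))*(2*x+4) - 3*(x-1)^2*2)/(2*x+4)^2 := by
            rw [div_le_div_iff₀ (by positivity) (by positivity)]
            nlinarith [mul_nonneg (sub_nonneg.2 hx.2.le) (sq_nonneg (x-1))]
          linarith
      have := anti (Set.mem_Ioc.2 ⟨ht, h.le⟩) (Set.mem_Ioc.2 ⟨one_pos, le_rfl⟩) h.le
      linarith [hF1 ▸ this]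
  have : 0 ≤ t * Real.log t + 1 - t - 3*(t-1)^2/(2*t+4) := hFt
  linarith

/-- Pointwise Pinsker-type bound. -/
lemma pointwise_bound {x y : ℝ} (hx : 0 ≤ x) (hy : 0 < y) :
    3*(x-y)^2/(2*x+4*y) ≤ x * Real.log (x/y) + y - x := by
  rcases eq_or_lt_of_le hx with h | h
  · rw [← h]
    rw [div_le_iff₀ (by linarith : (0:ℝ) < 2*0+4*y)]
    simp
    nlinarith
  · have ht : 0 < x / y := div_pos h hy
    have key := Fkey ht
    have hmul := mul_le_mul_of_nonneg_left key hy.le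
    have hL : y * (3*((x/y)-1)^2/(2*(x/y)+4)) = 3*(x-y)^2/(2*x+4*y) := by
      have hyne : y ≠ 0 := hy.ne'
      have hdne : (2*x+4*y) ≠ 0 := by positivity
      field_simp
    have hR : y * ((x/y) * Real.log (x/y) + 1 - (x/y)) = x * Real.log (x/y) + y - x := by
      field_simp
    rw [hL, hR] at hmul
    exact hmul

lemma psi_nonneg {x y : ℝ} (hx : 0 ≤ x) (hy : 0 ≤ y) (hsupp : y = 0 → x = 0) :
    0 ≤ x * Real.log (x/y) + y - x := by
  rcases eq_or_lt_of_le hy with h | h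
  · rw [← h] at hsupp ⊢
    simp [hsupp rfl]
  · exact le_trans (div_nonneg (by positivity) (by linarith)) (pointwise_bound hx h)

/-- ℓ₁ norm of a vector. -/
def l1norm {M : ℕ} (v : Fin M → ℝ) : ℝ := ∑ j, |v j|

/-- I-divergence of nonnegative vectors (with the convention `0 · log 0 = 0`, which holds
automatically since `Real.log 0 = 0`). -/
def Idiv {M : ℕ} (x y : Fin M → ℝ) : ℝ :=
  ∑ j, (x j * Real.log (x j / y j) + y j - x j)

/-- Pinsker's inequality for probability vectors. -/
lemma pinsker {M : ℕ} (p q : Fin M → ℝ) (hp : ∀ j, 0 ≤ p j) (hq : ∀ j, 0 ≤ q j)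
    (hsupp : ∀ j, q j = 0 → p j = 0) (hp1 : ∑ j, p j = 1) (hq1 : ∑ j, q j = 1) :
    l1norm (fun j => p j - q j) ≤ Real.sqrt (2 * Idiv p q) := by
  set f : Fin M → ℝ := fun j => 3*(p j - q j)^2/(2*p j + 4*q j) with hf
  set g : Fin M → ℝ := fun j => (2*p j + 4*q j)/3 with hg
  have hfnn : ∀ j, 0 ≤ f j := fun j =>
    div_nonneg (by positivity) (by nlinarith [hp j, hq j])
  have hgnn : ∀ j, 0 ≤ g j := fun j =>
    div_nonneg (by nlinarith [hp j, hq j]) (by norm_num)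
  have hsq : ∀ j, |p j - q j| ^ 2 = f j * g j := by
    intro j
    rcases eq_or_lt_of_le (hq j) with h | h
    · have hpj := hsupp j h.symm
      simp [hf, hg, hpj, ← h]
    · have hden : (0:ℝ) < 2*p j + 4*q j := by nlinarith [hp j]
      rw [sq_abs, hf, hg]
      field_simp
      rw [mul_div_cancel_right₀ _ (by linarith : p j * 2 + q j * 4 ≠ 0)]
  have CS := Finset.sum_sq_le_sum_mul_sum_of_sq_eq_mul Finset.univ
    (fun j _ => hfnn j) (fun j _ => hgnn j) (fun j _ => hsq j)
  have hgsum : ∑ j, g j = 2 := by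
    simp only [hg]
    rw [← Finset.sum_div]
    rw [Finset.sum_add_distrib, ← Finset.mul_sum, ← Finset.mul_sum, hp1, hq1]
    norm_num
  have hfle : ∑ j, f j ≤ Idiv p q := by
    apply Finset.sum_le_sum
    intro j _
    rcases eq_or_lt_of_le (hq j) with h | h
    · have hpj := hsupp j h.symm
      simp [hf, hpj, ← h]
    · exact pointwise_bound (hp j) h
  have hInn : 0 ≤ Idiv p q :=
    Finset.sum_nonneg fun j _ => psi_nonneg (hp j) (hq j) (hsupp j)
  have hfs : 0 ≤ ∑ j, f j := Finset.sum_nonneg fun j _ => hfnn j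
  have key : (∑ j, |p j - q j|) ^ 2 ≤ 2 * Idiv p q := by
    calc (∑ j, |p j - q j|) ^ 2 ≤ (∑ j, f j) * (∑ j, g j) := CS
      _ = (∑ j, f j) * 2 := by rw [hgsum]
      _ ≤ Idiv p q * 2 := by linarith
      _ = 2 * Idiv p q := by ring
  have habs : l1norm (fun j => p j - q j) = ∑ j, |p j - q j| := rfl
  rw [habs]
  have hnn : 0 ≤ ∑ j, |p j - q j| := Finset.sum_nonneg fun j _ => abs_nonneg _
  calc ∑ j, |p j - q j| = Real.sqrt ((∑ j, |p j - q j|)^2) := (Real.sqrt_sq hnn).symm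
    _ ≤ Real.sqrt (2 * Idiv p q) := Real.sqrt_le_sqrt key


/-- Lemma 2: if `I(y‖λ) ≤ ε` then `‖ y/Y − λ/Λ ‖₁ ≤ √(2ε/Y)`, where `Y = ‖y‖₁`, `Λ = ‖λ‖₁`. -/
theorem l1_normalized_bound {M : ℕ} (y lam : Fin M → ℝ)
    (hy : ∀ j, 0 ≤ y j) (hlam : ∀ j, 0 ≤ lam j)
    (hy0 : y ≠ 0) (hlam0 : lam ≠ 0)
    (hsupp : ∀ j, lam j = 0 → y j = 0)
    (ε : ℝ) (hε : 0 < ε)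
    (h : Idiv y lam ≤ ε) :
    l1norm (fun j => y j / l1norm y - lam j / l1norm lam) ≤
      Real.sqrt (2 * ε / l1norm y) := by
  have hY : l1norm y = ∑ j, y j := by
    unfold l1norm; exact Finset.sum_congr rfl fun j _ => abs_of_nonneg (hy j)
  have hL : l1norm lam = ∑ j, lam j := by
    unfold l1norm; exact Finset.sum_congr rfl fun j _ => abs_of_nonneg (hlam j)
  obtain ⟨j0, hj0⟩ : ∃ j, y j ≠ 0 := by
    by_contra hc
    push_neg at hc
    exact hy0 (funext fun j => hc j)
  have hYpos : 0 < l1norm y := by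
    rw [hY]
    exact Finset.sum_pos' (fun j _ => hy j) ⟨j0, Finset.mem_univ j0, (hy j0).lt_of_ne (Ne.symm hj0)⟩
  obtain ⟨k0, hk0⟩ : ∃ j, lam j ≠ 0 := by
    by_contra hc
    push_neg at hc
    exact hlam0 (funext fun j => hc j)
  have hLpos : 0 < l1norm lam := by
    rw [hL]
    exact Finset.sum_pos' (fun j _ => hlam j) ⟨k0, Finset.mem_univ k0, (hlam k0).lt_of_ne (Ne.symm hk0)⟩
  set Y := l1norm y with hYdef
  set Λ := l1norm lam with hLdef
  set p : Fin M → ℝ := fun j => y j / Y with hpdef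
  set q : Fin M → ℝ := fun j => lam j / Λ with hqdef
  have hpnn : ∀ j, 0 ≤ p j := fun j => div_nonneg (hy j) hYpos.le
  have hqnn : ∀ j, 0 ≤ q j := fun j => div_nonneg (hlam j) hLpos.le
  have hp1 : ∑ j, p j = 1 := by
    rw [hpdef]
    simp only
    rw [← Finset.sum_div, ← hY, div_self hYpos.ne']
  have hq1 : ∑ j, q j = 1 := by
    rw [hqdef]
    simp only
    rw [← Finset.sum_div, ← hL, div_self hLpos.ne']
  have hsupp' : ∀ j, q j = 0 → p j = 0 := by
    intro j hqj
    have : lam j = 0 := by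
      have := div_eq_zero_iff.1 hqj
      rcases this with h' | h'
      · exact h'
      · exact absurd h' hLpos.ne'
    simp [hpdef, hsupp j this]
  -- Idiv p q ≤ ε / Y
  have hterm : ∀ j, p j * Real.log (p j / q j) =
      (y j * Real.log (y j / lam j) + y j * Real.log (Λ/Y)) / Y := by
    intro j
    rcases eq_or_lt_of_le (hy j) with h' | h'
    · simp [hpdef, ← h']
    · have hlj : 0 < lam j := by
        rcases eq_or_lt_of_le (hlam j) with h'' | h''
        · exact absurd (hsupp j h''.symm) (ne_of_gt h')
        · exact h''
      have hpq : p j / q j = (y j / lam j) * (Λ / Y) := by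
        rw [hpdef, hqdef]
        field_simp
      rw [hpq, Real.log_mul (by positivity) (by positivity)]
      rw [hpdef]
      field_simp
  have hIdiv_pq : Idiv p q = (∑ j, y j * Real.log (y j / lam j) + Y * Real.log (Λ/Y)) / Y := by
    unfold Idiv
    rw [Finset.sum_sub_distrib, Finset.sum_add_distrib, hp1, hq1]
    simp only [add_sub_cancel_right]
    rw [Finset.sum_congr rfl fun j _ => hterm j, ← Finset.sum_div]
    congr 1
    rw [Finset.sum_add_distrib, ← Finset.sum_mul, ← hY]
  have hIy : Idiv y lam = (∑ j, y j * Real.log (y j / lam j)) + Λ - Y := by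
    unfold Idiv
    rw [Finset.sum_sub_distrib, Finset.sum_add_distrib, ← hY, ← hL]
  have hcorr : 0 ≤ Y * Real.log (Y/Λ) + Λ - Y := by
    have h1 := Real.one_sub_inv_le_log_of_pos (div_pos hYpos hLpos)
    have h2 : (Y/Λ)⁻¹ = Λ/Y := by field_simp
    rw [h2] at h1
    have h3 := mul_le_mul_of_nonneg_left h1 hYpos.le
    have h4 : Y * (1 - Λ/Y) = Y - Λ := by field_simp
    linarith [h4 ▸ h3]
  have hIpq_le : Idiv p q ≤ ε / Y := by
    rw [hIdiv_pq]
    rw [div_le_div_iff₀ hYpos hYpos]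
    have hlog : Real.log (Λ/Y) = - Real.log (Y/Λ) := by
      rw [← Real.log_inv]
      congr 1
      field_simp
    rw [hlog]
    nlinarith [hIy, hcorr, h]
  have hpin := pinsker p q hpnn hqnn hsupp' hp1 hq1
  have hfinal : Real.sqrt (2 * Idiv p q) ≤ Real.sqrt (2 * ε / Y) := by
    apply Real.sqrt_le_sqrt
    rw [mul_div_assoc]
    linarith
  exact le_trans hpin hfinal
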